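/- Let r > 0 and H be real numbers with H + 3 ≠ 0, and let real numbers Λ, E, p², B, q with p² > 0, B ≠ 0 and q ≠ 0 satisfy the five equations: p² = −2B/(q r³); −E + (H + 5 − 4qB)/(4r) = 0; (2 + H)/r² − Λ = 2B²/r⁴ + E·p²; −H/r² + Λ = −2B²/r⁴ + (H + 1 + 4qB)·p²/(4r); −1/r² + Λ = 2B²/r⁴ + p²/(2r). Then necessarily Λ = (H² + 6H + 11)/(3r²(H + 3)), E = (H² + 6H + 11)/(12r), p² = 4/(r(H + 3)), B² = r²(H − 1)(H + 4)/(6(H + 3)), and q² = (H − 1)(H + 3)(H + 4)/(24r²). -/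

import Mathlib

/-- any solution of the reduced Einstein–Dirac–Maxwell system with
p² > 0, B ≠ 0, q ≠ 0 necessarily has the stated values of Λ, E, p², B², q². -/
theorem stmt_1 (r H Λ E p2 B q : ℝ) (hr : 0 < r) (hH3 : H + 3 ≠ 0)
    (hp2pos : 0 < p2) (hB : B ≠ 0) (hq : q ≠ 0)
    (maxwell : p2 = -2 * B / (q * r ^ 3))
    (dirac : -E + (H + 5 - 4 * q * B) / (4 * r) = 0)
    (ein00 : (2 + H) / r ^ 2 - Λ = 2 * B ^ 2 / r ^ 4 + E * p2)
    (ein11 : -H / r ^ 2 + Λ = -2 * B ^ 2 / r ^ 4 + (H + 1 + 4 * q * B) * p2 / (4 * r))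
    (ein22 : -1 / r ^ 2 + Λ = 2 * B ^ 2 / r ^ 4 + p2 / (2 * r)) :
    Λ = (H ^ 2 + 6 * H + 11) / (3 * r ^ 2 * (H + 3)) ∧
    E = (H ^ 2 + 6 * H + 11) / (12 * r) ∧
    p2 = 4 / (r * (H + 3)) ∧
    B ^ 2 = r ^ 2 * (H - 1) * (H + 4) / (6 * (H + 3)) ∧
    q ^ 2 = (H - 1) * (H + 3) * (H + 4) / (24 * r ^ 2) := by
  have hr' : r ≠ 0 := hr.ne'
  have hr2 : r ^ 2 ≠ 0 := pow_ne_zero 2 hr'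
  have hr3 : r ^ 3 ≠ 0 := pow_ne_zero 3 hr'
  -- cleared (polynomial) forms of the equations
  have m : p2 * q * r ^ 3 = -2 * B := by
    rw [maxwell]; field_simp
  have d : 4 * E * r = H + 5 - 4 * q * B := by
    field_simp at dirac; linarith
  have e0 : (2 + H) * r ^ 2 - Λ * r ^ 4 = 2 * B ^ 2 + E * p2 * r ^ 4 :=
    mul_right_cancel₀ hr2 (by field_simp at ein00; linear_combination r ^ 2 * ein00)
  have e1 : -4 * H * r ^ 2 + 4 * Λ * r ^ 4 = -8 * B ^ 2 + (H + 1 + 4 * q * B) * p2 * r ^ 3 :=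
    mul_right_cancel₀ hr3 (by field_simp at ein11; linear_combination r ^ 3 * ein11)
  have e2 : -4 * r ^ 2 + 4 * Λ * r ^ 4 = 8 * B ^ 2 + 2 * p2 * r ^ 3 :=
    mul_right_cancel₀ hr3 (by field_simp at ein22; linear_combination 2 * r ^ 3 * ein22)
  -- p2 value
  have P : p2 * r * (H + 3) * (2 * r ^ 2) = 4 * (2 * r ^ 2) := by
    linear_combination -4 * e0 - e1 - p2 * r ^ 3 * d
  have P' : p2 * r * (H + 3) = 4 := mul_right_cancel₀ (by positivity) P
  -- value of q*B
  have Bm : p2 * q * r ^ 3 * B = -2 * B ^ 2 := by linear_combination B * m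
  have A1 : 4 * (H - 1) * r ^ 2 = (1 - H) * p2 * r ^ 3 - 12 * (q * B) * p2 * r ^ 3 := by
    linear_combination e2 - e1 + 8 * B * m
  have S : 12 * (q * B) * (4 * r ^ 2) = (1 - H) * (H + 4) * (4 * r ^ 2) := by
    linear_combination (H + 3) * A1 + ((1 - H) - 12 * (q * B)) * r ^ 2 * P'
  have S' : 12 * (q * B) = (1 - H) * (H + 4) := mul_right_cancel₀ (by positivity) S
  -- B^2 value
  have Bsq : B ^ 2 * (6 * (H + 3)) = r ^ 2 * (H - 1) * (H + 4) := by
    linear_combination 3 * (H + 3) * Bm - 3 * (q * B) * r ^ 2 * P' - r ^ 2 * S'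
  -- E value
  have Ev : E * (12 * r) = H ^ 2 + 6 * H + 11 := by
    linear_combination 3 * d - S'
  -- Λ value
  have Lam : Λ * (3 * r ^ 2 * (H + 3)) * (4 * r ^ 2) = (H ^ 2 + 6 * H + 11) * (4 * r ^ 2) := by
    linear_combination 3 * (H + 3) * e2 + 4 * Bsq + 6 * r ^ 2 * P'
  have Lam' : Λ * (3 * r ^ 2 * (H + 3)) = H ^ 2 + 6 * H + 11 :=
    mul_right_cancel₀ (by positivity) Lam
  -- q^2 value
  have Q : q ^ 2 * (24 * r ^ 2) * B ^ 2 = (H - 1) * (H + 3) * (H + 4) * B ^ 2 := by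
    linear_combination (r ^ 2 / 6) * (12 * (q * B) + (1 - H) * (H + 4)) * S'
      - ((H - 1) * (H + 4) / 6) * Bsq
  have Q' : q ^ 2 * (24 * r ^ 2) = (H - 1) * (H + 3) * (H + 4) :=
    mul_right_cancel₀ (pow_ne_zero 2 hB) Q
  refine ⟨?_, ?_, ?_, ?_, ?_⟩
  · rw [eq_div_iff (mul_ne_zero (by positivity) hH3)]; linear_combination Lam'
  · rw [eq_div_iff (by positivity)]; linear_combination Ev
  · rw [eq_div_iff (mul_ne_zero hr' hH3)]; linear_combination P'
  · rw [eq_div_iff (mul_ne_zero (by norm_num) hH3)]; linear_combination Bsq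
  · rw [eq_div_iff (by positivity)]; linear_combination Q'
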